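/- Let A and B be unital commutative Banach algebras and T : A⁻¹ → B⁻¹ a surjective map satisfying r(TfTg − 1) = r(fg − 1) for all f, g ∈ A⁻¹, where r denotes the spectral radius. If B is semisimple, then T(f⁻¹) = (Tf)⁻¹ for every f ∈ A⁻¹. -/
import Mathlib


theorem stmt1 {A B : Type*} [NormedCommRing A] [NormedAlgebra ℂ A] [CompleteSpace A]
    [NormedCommRing B] [NormedAlgebra ℂ B] [CompleteSpace B]
    (T : Aˣ → Bˣ) (hsurj : Function.Surjective T)
    (h : ∀ f g : Aˣ, spectralRadius ℂ ((T f : B) * (T g : B) - 1)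
        = spectralRadius ℂ ((f : A) * (g : A) - 1))
    (hB : ∀ b : B, spectralRadius ℂ b = 0 → b = 0) :
    ∀ f : Aˣ, T f⁻¹ = (T f)⁻¹ := by
  intro f
  have key := h f⁻¹ f
  have hA : ((f⁻¹ : Aˣ) : A) * (f : A) - 1 = 0 := by
    simp
  rw [hA, spectrum.spectralRadius_zero] at key
  have hz := hB _ key
  have hmul : (T f⁻¹ : B) * (T f : B) = 1 := by
    have := sub_eq_zero.mp hz
    exact this
  have : (T f⁻¹) * (T f) = 1 := Units.ext (by simpa using hmul)
  exact eq_inv_of_mul_eq_one_left this
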